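/- Let S ≥ 2 and let b be an S×S matrix with entries in {0,1} whose rows are indexed 1,…,S, such that b_{1,u} = 1 for all columns u and every row sum β_j = Σ_{s} b_{j,s} is at least 1. For each column s define q_s = (b_{1,s}/β_1) · ∏_{j=2}^{S} (1 − b_{j,s}/β_j) and q = Σ_{s=1}^{S} q_s. Suppose s is a column with q_s ≤ q_u for all columns u, and i ≥ 2 is a row with b_{i,s} = 1 and β_i ≥ 2. If b' is the matrix obtained from b by changing the entry b_{i,s} from 1 to 0, then the corresponding value q' computed from b' satisfies q' ≤ q. -/

import Mathlib

open Finset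

/-- `qcol b s = (b 0 s / β 0) · ∏_{j ≠ 0} (1 − b j s / β j)`, where `β j = ∑_u b j u`
is the `j`-th row sum; row `0` plays the role of "row 1" of the paper. -/
noncomputable def qcol {S : ℕ} [NeZero S] (b : Fin S → Fin S → ℝ) (s : Fin S) : ℝ :=
  (b 0 s / ∑ u, b 0 u) * ∏ j ∈ univ.erase (0 : Fin S), (1 - b j s / ∑ u, b j u)

/-- `qval b = ∑_s qcol b s`, the probability that node 1 gets scheduled in a round. -/
noncomputable def qval {S : ℕ} [NeZero S] (b : Fin S → Fin S → ℝ) : ℝ :=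
  ∑ s, qcol b s

/-- Lemma 3: for a 0/1 matrix `b` whose first row is all ones and whose row sums are
all at least 1, if `s` is a column minimizing `qcol b`, and `i` is a non-first row
with `b i s = 1` and row sum at least 2, then changing the entry `b i s` from 1 to 0
does not increase `q`. -/
theorem qval_le_of_erase_entry {S : ℕ} [NeZero S] (hS : 2 ≤ S)
    (b : Fin S → Fin S → ℝ)
    (hb01 : ∀ j u, b j u = 0 ∨ b j u = 1)
    (hrow1 : ∀ u, b 0 u = 1)
    (hβ : ∀ j, 1 ≤ ∑ u, b j u)
    (s i : Fin S) (hi : i ≠ 0)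
    (hmin : ∀ u, qcol b s ≤ qcol b u)
    (hbis : b i s = 1) (hβi : 2 ≤ ∑ u, b i u) :
    qval (fun j u => if j = i ∧ u = s then 0 else b j u) ≤ qval b := by
  classical
  set b' : Fin S → Fin S → ℝ := fun j u => if j = i ∧ u = s then 0 else b j u with hb'
  set βi : ℝ := ∑ u, b i u with hβidef
  set β0 : ℝ := ∑ u, b 0 u with hβ0def
  have hβ0pos : (0:ℝ) < β0 := lt_of_lt_of_le one_pos (hβ 0)
  have hβipos : (0:ℝ) < βi := lt_of_lt_of_le one_pos (hβ i)
  have hβi1 : (0:ℝ) < βi - 1 := by linarith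
  have hrow_ne : ∀ j, j ≠ i → ∀ u, b' j u = b j u := by
    intro j hj u; simp [hb', hj]
  have hrowsum_ne : ∀ j, j ≠ i → ∑ u, b' j u = ∑ u, b j u := by
    intro j hj; exact Finset.sum_congr rfl fun u _ => hrow_ne j hj u
  have hb'is : b' i s = 0 := by simp [hb']
  have hb'iu : ∀ u, u ≠ s → b' i u = b i u := by intro u hu; simp [hb', hu]
  have hrowsum_i : ∑ u, b' i u = βi - 1 := by
    have h1 : (∑ u ∈ univ.erase s, b i u) + b i s = βi :=
      Finset.sum_erase_add _ _ (mem_univ s)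
    have h2 : (∑ u ∈ univ.erase s, b' i u) + b' i s = ∑ u, b' i u :=
      Finset.sum_erase_add _ _ (mem_univ s)
    have h3 : ∑ u ∈ univ.erase s, b' i u = ∑ u ∈ univ.erase s, b i u :=
      Finset.sum_congr rfl (fun u hu => hb'iu u (Finset.ne_of_mem_erase hu))
    rw [← h2, h3, hb'is]
    rw [hbis] at h1
    linarith
  have hi_mem : i ∈ univ.erase (0 : Fin S) := Finset.mem_erase.mpr ⟨hi, mem_univ i⟩
  set R : Fin S → ℝ := fun u =>
    ∏ j ∈ (univ.erase (0 : Fin S)).erase i, (1 - b j u / ∑ v, b j v) with hR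
  have hqcol : ∀ u, qcol b u = (1/β0) * ((1 - b i u / βi) * R u) := by
    intro u
    unfold qcol
    rw [hrow1 u, ← Finset.mul_prod_erase _ _ hi_mem]
  have hqcol' : ∀ u, qcol b' u = (1/β0) * ((1 - b' i u / (βi - 1)) * R u) := by
    intro u
    unfold qcol
    have h0 : b' 0 u = 1 := by rw [hrow_ne 0 (Ne.symm hi) u]; exact hrow1 u
    rw [h0, hrowsum_ne 0 (Ne.symm hi), ← Finset.mul_prod_erase _ _ hi_mem, hrowsum_i]
    have hprod : ∏ j ∈ (univ.erase (0:Fin S)).erase i, (1 - b' j u / ∑ v, b' j v) = R u :=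
      Finset.prod_congr rfl fun j hj => by
        have hji : j ≠ i := Finset.ne_of_mem_erase hj
        rw [hrow_ne j hji u, hrowsum_ne j hji]
    rw [hprod]
  have hRmin : ∀ u, b i u = 1 → R s ≤ R u := by
    intro u h1
    have hm := hmin u
    rw [hqcol u, hqcol s, hbis, h1] at hm
    have hpos : 0 < (1/β0) * (1 - 1/βi) := by
      have : 1/βi < 1 := by
        rw [div_lt_one hβipos]; linarith
      have h2 : 0 < 1 - 1/βi := by linarith
      positivity
    have h2 : ((1/β0) * (1 - 1/βi)) * R s ≤ ((1/β0) * (1 - 1/βi)) * R u := by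
      nlinarith [hm]
    exact le_of_mul_le_mul_left h2 hpos
  have hsum_erase : ∑ u ∈ univ.erase s, b i u = βi - 1 := by
    have h1 : (∑ u ∈ univ.erase s, b i u) + b i s = βi :=
      Finset.sum_erase_add _ _ (mem_univ s)
    rw [hbis] at h1; linarith
  -- per-column expressions
  have hterm : ∀ u ∈ univ.erase s,
      qcol b' u = qcol b u - (1/β0) * (b i u * R u) / ((βi - 1) * βi) := by
    intro u hu
    rw [hqcol u, hqcol' u, hb'iu u (Finset.ne_of_mem_erase hu)]
    field_simp
    ring
  have hterms : qcol b' s = qcol b s + (1/β0) * R s / βi := by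
    rw [hqcol s, hqcol' s, hb'is, hbis]
    field_simp
    ring
  have hsum_ge : (βi - 1) * R s ≤ ∑ u ∈ univ.erase s, b i u * R u := by
    calc (βi - 1) * R s = ∑ u ∈ univ.erase s, b i u * R s := by
          rw [← Finset.sum_mul, hsum_erase]
      _ ≤ ∑ u ∈ univ.erase s, b i u * R u := by
          refine Finset.sum_le_sum fun u _ => ?_
          rcases hb01 i u with h | h
          · simp [h]
          · rw [h, one_mul, one_mul]; exact hRmin u h
  -- assemble
  clear_value b' βi β0 R
  have hT : ∑ u ∈ univ.erase s, (1/β0) * (b i u * R u) / ((βi - 1) * βi)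
      = (1/β0) * (∑ u ∈ univ.erase s, b i u * R u) / ((βi - 1) * βi) := by
    rw [Finset.mul_sum, Finset.sum_div]
  have hq' : qval b' = qval b
      - (1/β0) * (∑ u ∈ univ.erase s, b i u * R u) / ((βi - 1) * βi)
      + (1/β0) * R s / βi := by
    unfold qval
    rw [← Finset.sum_erase_add _ _ (mem_univ s), ← Finset.sum_erase_add _ (qcol b) (mem_univ s),
      Finset.sum_congr rfl hterm, hterms, Finset.sum_sub_distrib, hT]
    ring
  rw [hq']
  have hfin : (1/β0) * R s / βi ≤
      (1/β0) * (∑ u ∈ univ.erase s, b i u * R u) / ((βi - 1) * βi) := by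
    rw [div_le_div_iff₀ hβipos (by positivity)]
    have h0 : 0 < 1/β0 := by positivity
    nlinarith [mul_le_mul_of_nonneg_left hsum_ge (le_of_lt h0)]
  linarith
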